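/- Let a ≥ b be integers and let ς : [-∞,∞] → [0,1] be an order-preserving homeomorphism. Then the map δ_{ab} × s_{ab} : K(a;b) → J(a,b) × [b,a] is a homeomorphism, where K(a;b) carries the subspace topology of the ambient product, J(a,b) the product topology, and [b,a] ⊆ ℝ the standard topology. -/

import Mathlib

open scoped ENNReal

noncomputable section

namespace JKFlow

/-- `J(m,n) := ∏_{j ∈ ℤ, n < j < m} [0,∞]`, with the product topology. -/
abbrev Jspace (m n : ℤ) : Type :=
  {j : ℤ // n < j ∧ j < m} → ℝ≥0∞

/-- The boundary `∂J(m,n)`: points with at least one coordinate equal to `∞`. -/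
def JBoundary (m n : ℤ) : Set (Jspace m n) :=
  {z | ∃ j, z j = ∞}

/-- The ambient product containing `K(a;b)`. -/
abbrev KAmb (a b : ℤ) : Type :=
  ({j : ℤ // b ≤ j ∧ j < a} → ℝ≥0∞) × ({j : ℤ // b < j ∧ j ≤ a} → ℝ≥0∞)

/-- `K(a;b)` as a subset of the ambient product: the pairs `(x,y)` such that for some
integer `r` with `b ≤ r ≤ a` one has `x_j = 0` for `j < r` and `y_j = 0` for `j > r`. -/
def KSet (a b : ℤ) : Set (KAmb a b) :=
  {k | ∃ r : ℤ, b ≤ r ∧ r ≤ a ∧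
    (∀ j : {j : ℤ // b ≤ j ∧ j < a}, (j : ℤ) < r → k.1 j = 0) ∧
    (∀ j : {j : ℤ // b < j ∧ j ≤ a}, r < (j : ℤ) → k.2 j = 0)}

/-- The boundary `∂K(a;b)`: points with at least one coordinate equal to `∞`. -/
def KBoundary (a b : ℤ) : Set (KAmb a b) :=
  {k | (∃ j, k.1 j = ∞) ∨ (∃ j, k.2 j = ∞)}

/-- The map `δ_{ab} : K(a;b) → J(a,b)`, `δ(x,y)_j = x_j + y_j` for `b < j < a`. -/
def deltaMap (a b : ℤ) (k : KAmb a b) : Jspace a b :=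
  fun j => k.1 ⟨j.1, j.2.1.le, j.2.2⟩ + k.2 ⟨j.1, j.2.1, j.2.2.le⟩

/-- The first coordinate family of a point of `K(a;b)`, extended by `0` to all of `ℤ`. -/
def Xext (a b : ℤ) (k : KAmb a b) (j : ℤ) : ℝ≥0∞ :=
  if h : b ≤ j ∧ j < a then k.1 ⟨j, h⟩ else 0

/-- The second coordinate family of a point of `K(a;b)`, extended by `0` to all of `ℤ`. -/
def Yext (a b : ℤ) (k : KAmb a b) (j : ℤ) : ℝ≥0∞ :=
  if h : b < j ∧ j ≤ a then k.2 ⟨j, h⟩ else 0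

/-- The composition of `ς : [-∞,∞] ≃ₜ [0,1]` with the inclusion `[0,1] ⊆ ℝ`. -/
def sigmaR (ς : EReal ≃ₜ Set.Icc (0 : ℝ) 1) : EReal → ℝ :=
  fun z => (ς z : ℝ)

/-- The map `s_{ab} : K(a;b) → ℝ` (defined on the ambient product), relative to a
function `σ : [-∞,∞] → ℝ`:
`s(x,y) = a − Σ_{i=b}^{a−1} σ((Σ_{b≤l≤i} x_l) − (Σ_{i<l≤a} y_l))`. -/
def sMap (a b : ℤ) (σ : EReal → ℝ) (k : KAmb a b) : ℝ :=
  (a : ℝ) - ∑ i ∈ Finset.Ico b a,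
    σ ((↑(∑ l ∈ Finset.Icc b i, Xext a b k l) : EReal)
        - (↑(∑ l ∈ Finset.Ioc i a, Yext a b k l) : EReal))

/-- The composition map `i_{mpn} : J(m,p) × J(p,n) → J(m,n)`: the coordinates are those
of `u` for `p < j < m`, equal to `∞` at `j = p`, and those of `v` for `n < j < p`. -/
def iComp (m p n : ℤ) (u : Jspace m p) (v : Jspace p n) : Jspace m n :=
  fun j =>
    if h : p < (j : ℤ) then u ⟨j.1, h, j.2.2⟩
    else if h' : (j : ℤ) < p then v ⟨j.1, j.2.1, h'⟩
    else ∞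

/-- The left composition map `κ^L : J(a,a') × K(a';b) → K(a;b)`. -/
def kappaL (a a' b : ℤ) (z : Jspace a a') (k : KAmb a' b) : KAmb a b :=
  (fun j =>
      if h : a' < (j : ℤ) then z ⟨j.1, h, j.2.2⟩
      else if h' : (j : ℤ) < a' then k.1 ⟨j.1, j.2.1, h'⟩
      else ∞,
    fun j => if h : (j : ℤ) ≤ a' then k.2 ⟨j.1, j.2.1, h⟩ else 0)

/-- The right composition map `κ^R : K(a;b') × J(b',b) → K(a;b)`. -/
def kappaR (a b' b : ℤ) (k : KAmb a b') (w : Jspace b' b) : KAmb a b :=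
  (fun j => if h : b' ≤ (j : ℤ) then k.1 ⟨j.1, h, j.2.2⟩ else 0,
    fun j =>
      if h : b' < (j : ℤ) then k.2 ⟨j.1, h, j.2.2⟩
      else if h' : (j : ℤ) < b' then w ⟨j.1, j.2.1, h'⟩
      else ∞)

end JKFlow

open JKFlow

namespace JKAux

variable {a b : ℤ}

def XS (a b : ℤ) (k : KAmb a b) (i : ℤ) : ℝ≥0∞ := ∑ l ∈ Finset.Icc b i, Xext a b k l
def YS (a b : ℤ) (k : KAmb a b) (i : ℤ) : ℝ≥0∞ := ∑ l ∈ Finset.Ioc i a, Yext a b k l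
def S (a b : ℤ) (k : KAmb a b) (i : ℤ) : EReal := (XS a b k i : EReal) - (YS a b k i : EReal)

lemma sMap_eq (σ : EReal → ℝ) (k : KAmb a b) :
    sMap a b σ k = (a : ℝ) - ∑ i ∈ Finset.Ico b a, σ (S a b k i) := rfl

lemma XS_succ (k : KAmb a b) {i : ℤ} (h : b ≤ i + 1) :
    XS a b k (i + 1) = XS a b k i + Xext a b k (i + 1) := by
  have hs : Finset.Icc b (i + 1) = insert (i + 1) (Finset.Icc b i) := by
    ext x; simp only [Finset.mem_Icc, Finset.mem_insert]; omega
  rw [XS, hs, Finset.sum_insert (by simp only [Finset.mem_Icc]; omega), XS, add_comm]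

lemma YS_succ (k : KAmb a b) {i : ℤ} (h : i + 1 ≤ a) :
    YS a b k i = YS a b k (i + 1) + Yext a b k (i + 1) := by
  have hs : Finset.Ioc i a = insert (i + 1) (Finset.Ioc (i + 1) a) := by
    ext x; simp only [Finset.mem_Ioc, Finset.mem_insert]; omega
  rw [YS, hs, Finset.sum_insert (by simp only [Finset.mem_Ioc]; omega), YS, add_comm]

lemma good_witness {k : KAmb a b} (hk : k ∈ KSet a b) :
    ∃ r, b ≤ r ∧ r ≤ a ∧ (∀ l, l < r → Xext a b k l = 0) ∧
      (∀ l, r < l → Yext a b k l = 0) := by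
  obtain ⟨r, h1, h2, h3, h4⟩ := hk
  refine ⟨r, h1, h2, fun l hl => ?_, fun l hl => ?_⟩
  · unfold Xext; split
    · exact h3 _ hl
    · rfl
  · unfold Yext; split
    · exact h4 _ hl
    · rfl

lemma XS_zero {k : KAmb a b} {r : ℤ} (hx : ∀ l, l < r → Xext a b k l = 0) {i : ℤ}
    (hi : i < r) : XS a b k i = 0 :=
  Finset.sum_eq_zero fun l hl => hx l (by simp only [Finset.mem_Icc] at hl; omega)

lemma YS_zero {k : KAmb a b} {r : ℤ} (hy : ∀ l, r < l → Yext a b k l = 0) {i : ℤ}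
    (hi : r ≤ i) : YS a b k i = 0 :=
  Finset.sum_eq_zero fun l hl => hy l (by simp only [Finset.mem_Ioc] at hl; omega)

lemma min_zero {k : KAmb a b} (hk : k ∈ KSet a b) (i : ℤ) :
    XS a b k i = 0 ∨ YS a b k i = 0 := by
  obtain ⟨r, _, _, hx, hy⟩ := good_witness hk
  rcases lt_or_ge i r with h | h
  · exact Or.inl (XS_zero hx h)
  · exact Or.inr (YS_zero hy h)

lemma cross_lt {x y x' y' : ℝ≥0∞} (h : x = 0 ∨ y = 0) (h' : x' = 0 ∨ y' = 0) :
    ((x : EReal) - (y : EReal) < (x' : EReal) - (y' : EReal)) ↔ x + y' < x' + y := by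
  rcases h with rfl | rfl <;> rcases h' with rfl | rfl
  · -- x = 0, x' = 0
    simp only [EReal.coe_ennreal_zero, zero_sub, zero_add, neg_lt_neg_iff,
      EReal.neg_lt_neg_iff, EReal.coe_ennreal_lt_coe_ennreal_iff]
  · -- x = 0, y' = 0
    rw [EReal.coe_ennreal_zero, zero_sub, sub_zero, zero_add]
    constructor
    · intro hlt
      by_contra hc
      push_neg at hc
      rw [le_zero_iff, add_eq_zero] at hc
      rw [hc.1, hc.2] at hlt
      simp at hlt
    · intro hpos
      by_cases hx' : x' = 0
      · have hy : y ≠ 0 := by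
          rintro rfl
          rw [hx'] at hpos; simp at hpos
        have hlt : -(y : EReal) < 0 := by
          rw [← neg_zero]
          exact EReal.neg_lt_neg_iff.mpr (EReal.coe_ennreal_pos.mpr (pos_iff_ne_zero.mpr hy))
        rw [hx', EReal.coe_ennreal_zero]; exact hlt
      · calc -(y : EReal) ≤ 0 := by
              rw [← neg_zero]; exact EReal.neg_le_neg_iff.mpr (EReal.coe_ennreal_nonneg y)
          _ < (x' : EReal) := EReal.coe_ennreal_pos.mpr (pos_iff_ne_zero.mpr hx')
  · -- y = 0, x' = 0
    rw [EReal.coe_ennreal_zero, sub_zero, zero_sub, add_zero]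
    constructor
    · intro hlt
      exfalso
      have h1 : -(y' : EReal) ≤ 0 := by
        rw [← neg_zero]; exact EReal.neg_le_neg_iff.mpr (EReal.coe_ennreal_nonneg y')
      exact absurd hlt (not_lt.mpr (h1.trans (EReal.coe_ennreal_nonneg x)))
    · intro hlt
      exact absurd hlt (by simp)
  · -- y = 0, y' = 0
    simp only [EReal.coe_ennreal_zero, sub_zero, add_zero,
      EReal.coe_ennreal_lt_coe_ennreal_iff]

lemma cross_le {x y x' y' : ℝ≥0∞} (h : x = 0 ∨ y = 0) (h' : x' = 0 ∨ y' = 0) :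
    ((x : EReal) - (y : EReal) ≤ (x' : EReal) - (y' : EReal)) ↔ x + y' ≤ x' + y := by
  rw [← not_lt, ← not_lt, cross_lt h' h]

lemma cross_eq {x y x' y' : ℝ≥0∞} (h : x = 0 ∨ y = 0) (h' : x' = 0 ∨ y' = 0) :
    ((x : EReal) - (y : EReal) = (x' : EReal) - (y' : EReal)) ↔ x + y' = x' + y := by
  rw [le_antisymm_iff, le_antisymm_iff, cross_le h h', cross_le h' h]

lemma delta_apply (k : KAmb a b) {i : ℤ} (h1 : b < i) (h2 : i < a) :
    deltaMap a b k ⟨i, h1, h2⟩ = Xext a b k i + Yext a b k i := by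
  rw [Xext, Yext, dif_pos (⟨h1.le, h2⟩ : b ≤ i ∧ i < a), dif_pos (⟨h1, h2.le⟩ : b < i ∧ i ≤ a)]
  rfl

lemma zz_eq {k k' : KAmb a b} (hδ : deltaMap a b k = deltaMap a b k') {i : ℤ}
    (h1 : b < i) (h2 : i < a) :
    Xext a b k i + Yext a b k i = Xext a b k' i + Yext a b k' i := by
  have := congrFun hδ ⟨i, h1, h2⟩
  rwa [delta_apply k h1 h2, delta_apply k' h1 h2] at this

lemma up_step {k k' : KAmb a b} (hk : k ∈ KSet a b) (hk' : k' ∈ KSet a b)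
    (hδ : deltaMap a b k = deltaMap a b k') {i : ℤ} (hb : b ≤ i) (ha : i + 1 < a)
    (H : XS a b k i + YS a b k' i < XS a b k' i + YS a b k i ∨
      (XS a b k i = ⊤ ∧ XS a b k' i = ⊤)) :
    XS a b k (i + 1) + YS a b k' (i + 1) < XS a b k' (i + 1) + YS a b k (i + 1) ∨
      (XS a b k (i + 1) = ⊤ ∧ XS a b k' (i + 1) = ⊤) := by
  set x := Xext a b k (i + 1) with hxd
  set y := Yext a b k (i + 1) with hyd
  set x' := Xext a b k' (i + 1) with hxd'
  set y' := Yext a b k' (i + 1) with hyd'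
  have hrX : XS a b k (i + 1) = XS a b k i + x := XS_succ k (by omega)
  have hrX' : XS a b k' (i + 1) = XS a b k' i + x' := XS_succ k' (by omega)
  have hrY : YS a b k i = YS a b k (i + 1) + y := YS_succ k (by omega)
  have hrY' : YS a b k' i = YS a b k' (i + 1) + y' := YS_succ k' (by omega)
  have hzz : x + y = x' + y' := zz_eq hδ (by omega) ha
  rcases H with H | ⟨hT, hT'⟩
  · by_cases hfin : x + y = ⊤
    · rcases ENNReal.add_eq_top.mp (hzz.symm.trans hfin) with hx' | hy'
      · -- x' = ⊤
        have hX' : XS a b k' (i + 1) = ⊤ := by rw [hrX', hx', add_top]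
        have hY' : YS a b k' (i + 1) = 0 := by
          rcases min_zero hk' (i + 1) with h | h
          · rw [hX'] at h; exact absurd h (by simp)
          · exact h
        by_cases hX : XS a b k (i + 1) = ⊤
        · exact Or.inr ⟨hX, hX'⟩
        · left
          rw [hY', add_zero, hX', top_add]
          exact lt_top_iff_ne_top.mpr hX
      · -- y' = ⊤
        exfalso
        have hYt : YS a b k' i = ⊤ := by rw [hrY', hy', add_top]
        rw [hYt, add_top] at H
        exact absurd H (by simp)
    · have hy : y ≠ ⊤ := fun hh => hfin (by rw [hh, add_top])
      have hy' : y' ≠ ⊤ := fun hh => hfin (hzz.trans (by rw [hh, add_top]) : x + y = ⊤)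
      left
      have key : (XS a b k (i + 1) + YS a b k' (i + 1)) + (y + y')
          < (XS a b k' (i + 1) + YS a b k (i + 1)) + (y + y') := by
        have e1 : (XS a b k (i + 1) + YS a b k' (i + 1)) + (y + y')
            = (XS a b k i + YS a b k' i) + (x + y) := by
          rw [hrX, hrY']; ring
        have e2 : (XS a b k' (i + 1)) + YS a b k (i + 1) + (y + y')
            = (XS a b k' i + YS a b k i) + (x + y) := by
          rw [hrX', hrY, hzz]; ring
        rw [e1, e2]
        exact ENNReal.add_lt_add_right hfin H
      exact (ENNReal.add_lt_add_iff_right (ENNReal.add_ne_top.mpr ⟨hy, hy'⟩)).mp key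
  · right
    constructor
    · rw [hrX, hT, top_add]
    · rw [hrX', hT', top_add]

lemma down_step {k k' : KAmb a b} (hk : k ∈ KSet a b) (hk' : k' ∈ KSet a b)
    (hδ : deltaMap a b k = deltaMap a b k') {i : ℤ} (hb : b ≤ i) (ha : i + 1 < a)
    (H : XS a b k (i + 1) + YS a b k' (i + 1) < XS a b k' (i + 1) + YS a b k (i + 1) ∨
      (YS a b k (i + 1) = ⊤ ∧ YS a b k' (i + 1) = ⊤)) :
    XS a b k i + YS a b k' i < XS a b k' i + YS a b k i ∨
      (YS a b k i = ⊤ ∧ YS a b k' i = ⊤) := by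
  set x := Xext a b k (i + 1) with hxd
  set y := Yext a b k (i + 1) with hyd
  set x' := Xext a b k' (i + 1) with hxd'
  set y' := Yext a b k' (i + 1) with hyd'
  have hrX : XS a b k (i + 1) = XS a b k i + x := XS_succ k (by omega)
  have hrX' : XS a b k' (i + 1) = XS a b k' i + x' := XS_succ k' (by omega)
  have hrY : YS a b k i = YS a b k (i + 1) + y := YS_succ k (by omega)
  have hrY' : YS a b k' i = YS a b k' (i + 1) + y' := YS_succ k' (by omega)
  have hzz : x + y = x' + y' := zz_eq hδ (by omega) ha
  rcases H with H | ⟨hT, hT'⟩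
  · by_cases hfin : x + y = ⊤
    · rcases ENNReal.add_eq_top.mp hfin with hx | hy
      · -- x = ⊤
        exfalso
        have hX : XS a b k (i + 1) = ⊤ := by rw [hrX, hx, add_top]
        rw [hX, top_add] at H
        exact absurd H (by simp)
      · -- y = ⊤
        have hYt : YS a b k i = ⊤ := by rw [hrY, hy, add_top]
        by_cases hYt' : YS a b k' i = ⊤
        · exact Or.inr ⟨hYt, hYt'⟩
        · left
          have hX0 : XS a b k i = 0 := by
            rcases min_zero hk i with h | h
            · exact h
            · rw [hYt] at h; exact absurd h (by simp)
          rw [hX0, zero_add, hYt, add_top]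
          exact lt_top_iff_ne_top.mpr hYt'
    · have hy : y ≠ ⊤ := fun hh => hfin (by rw [hh, add_top])
      have hy' : y' ≠ ⊤ := fun hh => hfin (hzz.trans (by rw [hh, add_top]) : x + y = ⊤)
      left
      have key : (XS a b k i + YS a b k' i) + (x + y)
          < (XS a b k' i + YS a b k i) + (x + y) := by
        have e1 : (XS a b k i + YS a b k' i) + (x + y)
            = (XS a b k (i + 1) + YS a b k' (i + 1)) + (y + y') := by
          rw [hrX, hrY']; ring
        have e2 : (XS a b k' i + YS a b k i) + (x + y)
            = (XS a b k' (i + 1) + YS a b k (i + 1)) + (y + y') := by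
          rw [hrX', hrY, hzz]; ring
        rw [e1, e2]
        exact ENNReal.add_lt_add_right (ENNReal.add_ne_top.mpr ⟨hy, hy'⟩) H
      exact (ENNReal.add_lt_add_iff_right hfin).mp key
  · right
    exact ⟨by rw [hrY, hT, top_add], by rw [hrY', hT', top_add]⟩

lemma S_top {k : KAmb a b} (hk : k ∈ KSet a b) {i : ℤ} (h : XS a b k i = ⊤) :
    S a b k i = ⊤ := by
  have hY : YS a b k i = 0 := by
    rcases min_zero hk i with h' | h'
    · rw [h] at h'; exact absurd h' (by simp)
    · exact h'
  rw [S, h, hY, EReal.coe_ennreal_top, EReal.coe_ennreal_zero, sub_zero]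

lemma S_bot {k : KAmb a b} {i : ℤ} (h : YS a b k i = ⊤) : S a b k i = ⊥ := by
  rw [S, h, EReal.coe_ennreal_top, EReal.sub_top]

lemma sum_lt {σ : EReal → ℝ} (hσ : StrictMono σ) {k k' : KAmb a b}
    (hk : k ∈ KSet a b) (hk' : k' ∈ KSet a b)
    (hδ : deltaMap a b k = deltaMap a b k')
    {j : ℤ} (hjm : j ∈ Finset.Ico b a)
    (hjlt : XS a b k j + YS a b k' j < XS a b k' j + YS a b k j) :
    ∑ i ∈ Finset.Ico b a, σ (S a b k i) < ∑ i ∈ Finset.Ico b a, σ (S a b k' i) := by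
  rw [Finset.mem_Ico] at hjm
  have up : ∀ d : ℕ, j + d < a →
      (XS a b k (j + d) + YS a b k' (j + d) < XS a b k' (j + d) + YS a b k (j + d) ∨
        (XS a b k (j + d) = ⊤ ∧ XS a b k' (j + d) = ⊤)) := by
    intro d
    induction d with
    | zero => intro _; left; simpa using hjlt
    | succ n ih =>
      intro hlt
      have hc : (j + ((n : ℤ) + 1)) = (j + n) + 1 := by ring
      have hc2 : ((n + 1 : ℕ) : ℤ) = (n : ℤ) + 1 := by push_cast; ring
      rw [hc2, hc]
      have h1 : j + (n : ℤ) < a := by omega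
      exact up_step hk hk' hδ (by omega) (by omega) (ih h1)
  have down : ∀ d : ℕ, b ≤ j - d →
      (XS a b k (j - d) + YS a b k' (j - d) < XS a b k' (j - d) + YS a b k (j - d) ∨
        (YS a b k (j - d) = ⊤ ∧ YS a b k' (j - d) = ⊤)) := by
    intro d
    induction d with
    | zero => intro _; left; simpa using hjlt
    | succ n ih =>
      intro hle
      have hc2 : ((n + 1 : ℕ) : ℤ) = (n : ℤ) + 1 := by push_cast; ring
      rw [hc2]
      have heq : (j - ((n : ℤ) + 1)) + 1 = j - n := by ring
      have h1 : b ≤ j - (n : ℤ) := by omega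
      have := down_step (i := j - ((n : ℤ) + 1)) hk hk' hδ (by omega) (by omega)
      rw [heq] at this
      exact this (ih h1)
  have hle : ∀ i ∈ Finset.Ico b a, σ (S a b k i) ≤ σ (S a b k' i) := by
    intro i hi
    rw [Finset.mem_Ico] at hi
    rcases le_or_gt j i with h | h
    · have hd : j + ((i - j).toNat : ℤ) = i := by omega
      have := up (i - j).toNat (by omega)
      rw [hd] at this
      rcases this with hc | ⟨h1, h2⟩
      · exact (hσ ((cross_lt (min_zero hk i) (min_zero hk' i)).mpr hc)).le
      · rw [S_top hk h1, S_top hk' h2]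
    · have hd : j - ((j - i).toNat : ℤ) = i := by omega
      have := down (j - i).toNat (by omega)
      rw [hd] at this
      rcases this with hc | ⟨h1, h2⟩
      · exact (hσ ((cross_lt (min_zero hk i) (min_zero hk' i)).mpr hc)).le
      · rw [S_bot h1, S_bot h2]
  refine Finset.sum_lt_sum hle ⟨j, Finset.mem_Ico.mpr hjm, ?_⟩
  exact hσ ((cross_lt (min_zero hk j) (min_zero hk' j)).mpr hjlt)

lemma XY_eq {σ : EReal → ℝ} (hσ : StrictMono σ) {k k' : KAmb a b}
    (hk : k ∈ KSet a b) (hk' : k' ∈ KSet a b)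
    (hδ : deltaMap a b k = deltaMap a b k')
    (hs : sMap a b σ k = sMap a b σ k') :
    ∀ i ∈ Finset.Ico b a, XS a b k i = XS a b k' i ∧ YS a b k i = YS a b k' i := by
  have hsum : ∑ i ∈ Finset.Ico b a, σ (S a b k i) = ∑ i ∈ Finset.Ico b a, σ (S a b k' i) := by
    rw [sMap_eq, sMap_eq] at hs
    linarith
  intro i hi
  have h1 : ¬ (XS a b k i + YS a b k' i < XS a b k' i + YS a b k i) :=
    fun hc => absurd hsum (ne_of_lt (sum_lt hσ hk hk' hδ hi hc))
  have h2 : ¬ (XS a b k' i + YS a b k i < XS a b k i + YS a b k' i) :=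
    fun hc => absurd hsum.symm (ne_of_lt (sum_lt hσ hk' hk hδ.symm hi hc))
  have he : XS a b k i + YS a b k' i = XS a b k' i + YS a b k i :=
    le_antisymm (not_lt.mp h2) (not_lt.mp h1)
  rcases min_zero hk i with hx | hy <;> rcases min_zero hk' i with hx' | hy'
  · rw [hx, hx', zero_add, zero_add] at he
    exact ⟨hx.trans hx'.symm, he.symm⟩
  · rw [hx, hy', zero_add] at he
    rw [eq_comm, add_eq_zero] at he
    exact ⟨hx.trans he.1.symm, he.2.trans hy'.symm⟩
  · rw [hy, hx', add_zero] at he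
    rw [add_eq_zero] at he
    exact ⟨he.1.trans hx'.symm, hy.trans he.2.symm⟩
  · rw [hy, hy', add_zero, add_zero] at he
    exact ⟨he, hy.trans hy'.symm⟩

lemma Xext_nonzero_mem {k : KAmb a b} {l : ℤ} (h : Xext a b k l ≠ 0) : b ≤ l ∧ l < a := by
  by_contra hc
  exact h (by rw [Xext, dif_neg hc])

lemma fst_eq {k k' : KAmb a b} (hk : k ∈ KSet a b) (hk' : k' ∈ KSet a b)
    (hδ : deltaMap a b k = deltaMap a b k')
    (hXY : ∀ i ∈ Finset.Ico b a, XS a b k i = XS a b k' i ∧ YS a b k i = YS a b k' i) :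
    k.1 = k'.1 := by
  funext j
  rcases j with ⟨i, hbi, hia⟩
  have hba : b < a := lt_of_le_of_lt hbi hia
  obtain ⟨r, hrb, hra, hx0, hy0⟩ := good_witness hk
  obtain ⟨r', hrb', hra', hx0', hy0'⟩ := good_witness hk'
  have hXe : k.1 ⟨i, hbi, hia⟩ = Xext a b k i := by
    rw [Xext, dif_pos (show b ≤ i ∧ i < a from ⟨hbi, hia⟩)]
  have hXe' : k'.1 ⟨i, hbi, hia⟩ = Xext a b k' i := by
    rw [Xext, dif_pos (show b ≤ i ∧ i < a from ⟨hbi, hia⟩)]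
  rw [hXe, hXe']
  rcases eq_or_lt_of_le hbi with heq | hbi'
  · -- i = b
    subst heq
    have e : XS a b k b = Xext a b k b := by
      rw [XS, Finset.Icc_self, Finset.sum_singleton]
    have e' : XS a b k' b = Xext a b k' b := by
      rw [XS, Finset.Icc_self, Finset.sum_singleton]
    rw [← e, ← e']
    exact (hXY b (Finset.mem_Ico.mpr ⟨le_refl b, hia⟩)).1
  · -- b < i
    have hmem : i ∈ Finset.Ico b a := Finset.mem_Ico.mpr ⟨hbi, hia⟩
    have hmem1 : i - 1 ∈ Finset.Ico b a := Finset.mem_Ico.mpr ⟨by omega, by omega⟩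
    by_cases hY : YS a b k i = 0
    · by_cases hX : XS a b k (i - 1) = 0
      · have hX' : XS a b k' (i - 1) = 0 := (hXY _ hmem1).1 ▸ hX
        have hs : XS a b k i = XS a b k (i - 1) + Xext a b k i := by
          have := XS_succ k (i := i - 1) (by omega)
          rwa [sub_add_cancel] at this
        have hs' : XS a b k' i = XS a b k' (i - 1) + Xext a b k' i := by
          have := XS_succ k' (i := i - 1) (by omega)
          rwa [sub_add_cancel] at this
        have e : Xext a b k i = XS a b k i := by rw [hs, hX, zero_add]
        have e' : Xext a b k' i = XS a b k' i := by rw [hs', hX', zero_add]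
        rw [e, e']
        exact (hXY i hmem).1
      · -- XS k (i-1) ≠ 0 : r ≤ some l ≤ i-1, so Yext k i = 0
        have hEx : ∃ l ∈ Finset.Icc b (i - 1), Xext a b k l ≠ 0 := by
          by_contra hcon
          push_neg at hcon
          exact hX (Finset.sum_eq_zero hcon)
        obtain ⟨l, hlm, hlne⟩ := hEx
        rw [Finset.mem_Icc] at hlm
        have hrl : r ≤ l := by
          by_contra hc; push_neg at hc; exact hlne (hx0 l hc)
        have hyi : Yext a b k i = 0 := hy0 i (by omega)
        have hX2' : XS a b k' (i - 1) ≠ 0 := (hXY _ hmem1).1 ▸ hX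
        have hEx' : ∃ l ∈ Finset.Icc b (i - 1), Xext a b k' l ≠ 0 := by
          by_contra hcon
          push_neg at hcon
          exact hX2' (Finset.sum_eq_zero hcon)
        obtain ⟨l', hlm', hlne'⟩ := hEx'
        rw [Finset.mem_Icc] at hlm'
        have hrl' : r' ≤ l' := by
          by_contra hc; push_neg at hc; exact hlne' (hx0' l' hc)
        have hyi' : Yext a b k' i = 0 := hy0' i (by omega)
        have hz := zz_eq hδ hbi' hia
        rwa [hyi, hyi', add_zero, add_zero] at hz
    · -- YS k i ≠ 0
      have hEx : ∃ l ∈ Finset.Ioc i a, Yext a b k l ≠ 0 := by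
        by_contra hcon
        push_neg at hcon
        exact hY (Finset.sum_eq_zero hcon)
      obtain ⟨l, hlm, hlne⟩ := hEx
      rw [Finset.mem_Ioc] at hlm
      have hrl : l ≤ r := by
        by_contra hc; push_neg at hc; exact hlne (hy0 l hc)
      have hxi : Xext a b k i = 0 := hx0 i (by omega)
      have hY2' : YS a b k' i ≠ 0 := (hXY _ hmem).2 ▸ hY
      have hEx' : ∃ l ∈ Finset.Ioc i a, Yext a b k' l ≠ 0 := by
        by_contra hcon
        push_neg at hcon
        exact hY2' (Finset.sum_eq_zero hcon)
      obtain ⟨l', hlm', hlne'⟩ := hEx'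
      rw [Finset.mem_Ioc] at hlm'
      have hrl' : l' ≤ r' := by
        by_contra hc; push_neg at hc; exact hlne' (hy0' l' hc)
      have hxi' : Xext a b k' i = 0 := hx0' i (by omega)
      rw [hxi, hxi']

lemma snd_eq {k k' : KAmb a b} (hk : k ∈ KSet a b) (hk' : k' ∈ KSet a b)
    (hδ : deltaMap a b k = deltaMap a b k')
    (hXY : ∀ i ∈ Finset.Ico b a, XS a b k i = XS a b k' i ∧ YS a b k i = YS a b k' i) :
    k.2 = k'.2 := by
  funext j
  rcases j with ⟨i, hbi, hia⟩
  have hba : b < a := lt_of_lt_of_le hbi hia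
  obtain ⟨r, hrb, hra, hx0, hy0⟩ := good_witness hk
  obtain ⟨r', hrb', hra', hx0', hy0'⟩ := good_witness hk'
  have hYe : k.2 ⟨i, hbi, hia⟩ = Yext a b k i := by
    rw [Yext, dif_pos (show b < i ∧ i ≤ a from ⟨hbi, hia⟩)]
  have hYe' : k'.2 ⟨i, hbi, hia⟩ = Yext a b k' i := by
    rw [Yext, dif_pos (show b < i ∧ i ≤ a from ⟨hbi, hia⟩)]
  rw [hYe, hYe']
  have hsY : YS a b k (i - 1) = YS a b k i + Yext a b k i := by
    have := YS_succ k (i := i - 1) (by omega)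
    rwa [sub_add_cancel] at this
  have hsY' : YS a b k' (i - 1) = YS a b k' i + Yext a b k' i := by
    have := YS_succ k' (i := i - 1) (by omega)
    rwa [sub_add_cancel] at this
  have hmem1 : i - 1 ∈ Finset.Ico b a := Finset.mem_Ico.mpr ⟨by omega, by omega⟩
  rcases eq_or_lt_of_le hia with heq | hia'
  · -- i = a
    have e : YS a b k (i - 1) = Yext a b k i := by
      rw [hsY, YS_zero hy0 (show r ≤ i by omega), zero_add]
    have e' : YS a b k' (i - 1) = Yext a b k' i := by
      rw [hsY', YS_zero hy0' (show r' ≤ i by omega), zero_add]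
    rw [← e, ← e']
    exact (hXY _ hmem1).2
  · -- i < a
    have hmem : i ∈ Finset.Ico b a := Finset.mem_Ico.mpr ⟨hbi.le, hia'⟩
    by_cases hX : XS a b k (i - 1) = 0
    · by_cases hY : YS a b k i = 0
      · have hY' : YS a b k' i = 0 := (hXY _ hmem).2 ▸ hY
        have e : YS a b k (i - 1) = Yext a b k i := by rw [hsY, hY, zero_add]
        have e' : YS a b k' (i - 1) = Yext a b k' i := by rw [hsY', hY', zero_add]
        rw [← e, ← e']
        exact (hXY _ hmem1).2
      · -- YS k i ≠ 0 : x_i = 0 both sides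
        have hEx : ∃ l ∈ Finset.Ioc i a, Yext a b k l ≠ 0 := by
          by_contra hcon
          push_neg at hcon
          exact hY (Finset.sum_eq_zero hcon)
        obtain ⟨l, hlm, hlne⟩ := hEx
        rw [Finset.mem_Ioc] at hlm
        have hrl : l ≤ r := by
          by_contra hc; push_neg at hc; exact hlne (hy0 l hc)
        have hxi : Xext a b k i = 0 := hx0 i (by omega)
        have hY2' : YS a b k' i ≠ 0 := (hXY _ hmem).2 ▸ hY
        have hEx' : ∃ l ∈ Finset.Ioc i a, Yext a b k' l ≠ 0 := by
          by_contra hcon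
          push_neg at hcon
          exact hY2' (Finset.sum_eq_zero hcon)
        obtain ⟨l', hlm', hlne'⟩ := hEx'
        rw [Finset.mem_Ioc] at hlm'
        have hrl' : l' ≤ r' := by
          by_contra hc; push_neg at hc; exact hlne' (hy0' l' hc)
        have hxi' : Xext a b k' i = 0 := hx0' i (by omega)
        have hz := zz_eq hδ hbi hia'
        rwa [hxi, hxi', zero_add, zero_add] at hz
    · -- XS k (i-1) ≠ 0 : y_i = 0 both sides
      have hEx : ∃ l ∈ Finset.Icc b (i - 1), Xext a b k l ≠ 0 := by
        by_contra hcon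
        push_neg at hcon
        exact hX (Finset.sum_eq_zero hcon)
      obtain ⟨l, hlm, hlne⟩ := hEx
      rw [Finset.mem_Icc] at hlm
      have hrl : r ≤ l := by
        by_contra hc; push_neg at hc; exact hlne (hx0 l hc)
      have hyi : Yext a b k i = 0 := hy0 i (by omega)
      have hX2' : XS a b k' (i - 1) ≠ 0 := (hXY _ hmem1).1 ▸ hX
      have hEx' : ∃ l ∈ Finset.Icc b (i - 1), Xext a b k' l ≠ 0 := by
        by_contra hcon
        push_neg at hcon
        exact hX2' (Finset.sum_eq_zero hcon)
      obtain ⟨l', hlm', hlne'⟩ := hEx'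
      rw [Finset.mem_Icc] at hlm'
      have hrl' : r' ≤ l' := by
        by_contra hc; push_neg at hc; exact hlne' (hx0' l' hc)
      have hyi' : Yext a b k' i = 0 := hy0' i (by omega)
      rw [hyi, hyi']

lemma inj_main {σ : EReal → ℝ} (hσ : StrictMono σ) {k k' : KAmb a b}
    (hk : k ∈ KSet a b) (hk' : k' ∈ KSet a b)
    (hδ : deltaMap a b k = deltaMap a b k')
    (hs : sMap a b σ k = sMap a b σ k') : k = k' := by
  have hXY := XY_eq hσ hk hk' hδ hs
  exact Prod.ext (fst_eq hk hk' hδ hXY) (snd_eq hk hk' hδ hXY)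

lemma cont_XS (i : ℤ) : Continuous fun k : KAmb a b => XS a b k i := by
  apply continuous_finset_sum
  intro l _
  by_cases h : b ≤ l ∧ l < a
  · simp only [Xext, dif_pos h]
    exact (continuous_apply _).comp continuous_fst
  · simp only [Xext, dif_neg h]
    exact continuous_const

lemma cont_YS (i : ℤ) : Continuous fun k : KAmb a b => YS a b k i := by
  apply continuous_finset_sum
  intro l _
  by_cases h : b < l ∧ l ≤ a
  · simp only [Yext, dif_pos h]
    exact (continuous_apply _).comp continuous_snd
  · simp only [Yext, dif_neg h]
    exact continuous_const

lemma continuousOn_union_closed {X Y : Type*} [TopologicalSpace X] [TopologicalSpace Y]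
    {f : X → Y} {s t : Set X} (hs : IsClosed s) (ht : IsClosed t)
    (hfs : ContinuousOn f s) (hft : ContinuousOn f t) : ContinuousOn f (s ∪ t) := by
  have key : ∀ {u : Set X}, IsClosed u → ContinuousOn f u → ∀ x : X,
      Filter.Tendsto f (nhdsWithin x u) (nhds (f x)) := by
    intro u hu hfu x
    by_cases hxu : x ∈ u
    · exact hfu x hxu
    · have hb : nhdsWithin x u = ⊥ := by
        rw [← Filter.not_neBot]
        rw [← mem_closure_iff_nhdsWithin_neBot, hu.closure_eq]
        exact hxu
      rw [hb]
      exact Filter.tendsto_bot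
  intro x hx
  unfold ContinuousWithinAt
  rw [nhdsWithin_union, Filter.tendsto_sup]
  exact ⟨key hs hfs x, key ht hft x⟩

lemma cont_sub_cross :
    ContinuousOn (fun p : ℝ≥0∞ × ℝ≥0∞ => (p.1 : EReal) - (p.2 : EReal))
      ({p : ℝ≥0∞ × ℝ≥0∞ | p.1 = 0} ∪ {p : ℝ≥0∞ × ℝ≥0∞ | p.2 = 0}) := by
  apply continuousOn_union_closed
  · exact isClosed_eq continuous_fst continuous_const
  · exact isClosed_eq continuous_snd continuous_const
  · have hc : Continuous fun p : ℝ≥0∞ × ℝ≥0∞ => -((p.2 : ℝ≥0∞) : EReal) :=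
      (continuous_coe_ennreal_ereal.comp continuous_snd).neg
    apply hc.continuousOn.congr
    intro p hp
    have h0 : p.1 = 0 := hp
    show (p.1 : EReal) - (p.2 : EReal) = -(p.2 : EReal)
    rw [h0, EReal.coe_ennreal_zero, zero_sub]
  · have hc : Continuous fun p : ℝ≥0∞ × ℝ≥0∞ => ((p.1 : ℝ≥0∞) : EReal) :=
      continuous_coe_ennreal_ereal.comp continuous_fst
    apply hc.continuousOn.congr
    intro p hp
    have h0 : p.2 = 0 := hp
    show (p.1 : EReal) - (p.2 : EReal) = (p.1 : EReal)
    rw [h0, EReal.coe_ennreal_zero, sub_zero]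

lemma sMap_continuousOn {σ : EReal → ℝ} (hσc : Continuous σ) :
    ContinuousOn (sMap a b σ) (KSet a b) := by
  have : ContinuousOn (fun k : KAmb a b =>
      (a : ℝ) - ∑ i ∈ Finset.Ico b a, σ (S a b k i)) (KSet a b) := by
    apply ContinuousOn.sub continuousOn_const
    apply continuousOn_finset_sum
    intro i _
    have hpair : Continuous fun k : KAmb a b => (XS a b k i, YS a b k i) :=
      (cont_XS i).prodMk (cont_YS i)
    have hSOn : ContinuousOn (fun k : KAmb a b => S a b k i) (KSet a b) := by
      apply ContinuousOn.comp cont_sub_cross hpair.continuousOn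
      intro k hk
      rcases min_zero hk i with h | h
      · exact Or.inl h
      · exact Or.inr h
    exact hσc.comp_continuousOn hSOn
  exact this.congr fun k _ => sMap_eq σ k

lemma isClosed_KSet : IsClosed (KSet a b) := by
  have hset : KSet a b = ⋃ r ∈ Finset.Icc b a, {k : KAmb a b |
      (∀ j : {j : ℤ // b ≤ j ∧ j < a}, (j : ℤ) < r → k.1 j = 0) ∧
      (∀ j : {j : ℤ // b < j ∧ j ≤ a}, r < (j : ℤ) → k.2 j = 0)} := by
    ext k
    simp only [KSet, Set.mem_setOf_eq, Set.mem_iUnion, Finset.mem_Icc, exists_prop]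
    constructor
    · rintro ⟨r, h1, h2, h3, h4⟩; exact ⟨r, ⟨h1, h2⟩, h3, h4⟩
    · rintro ⟨r, ⟨h1, h2⟩, h3, h4⟩; exact ⟨r, h1, h2, h3, h4⟩
  rw [hset]
  apply Set.Finite.isClosed_biUnion (Finset.finite_toSet _)
  intro r _
  have e : {k : KAmb a b |
      (∀ j : {j : ℤ // b ≤ j ∧ j < a}, (j : ℤ) < r → k.1 j = 0) ∧
      (∀ j : {j : ℤ // b < j ∧ j ≤ a}, r < (j : ℤ) → k.2 j = 0)}
      = (⋂ j : {j : ℤ // b ≤ j ∧ j < a}, {k : KAmb a b | (j : ℤ) < r → k.1 j = 0}) ∩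
        (⋂ j : {j : ℤ // b < j ∧ j ≤ a}, {k : KAmb a b | r < (j : ℤ) → k.2 j = 0}) := by
    ext k
    simp only [Set.mem_setOf_eq, Set.mem_inter_iff, Set.mem_iInter]
  rw [e]
  apply IsClosed.inter
  · apply isClosed_iInter
    intro j
    by_cases h : (j : ℤ) < r
    · have e2 : {k : KAmb a b | (j : ℤ) < r → k.1 j = 0} = {k : KAmb a b | k.1 j = 0} := by
        ext k; simp [h]
      rw [e2]
      exact isClosed_eq ((continuous_apply j).comp continuous_fst) continuous_const
    · have e2 : {k : KAmb a b | (j : ℤ) < r → k.1 j = 0} = Set.univ := by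
        ext k; simp [h]
      rw [e2]; exact isClosed_univ
  · apply isClosed_iInter
    intro j
    by_cases h : r < (j : ℤ)
    · have e2 : {k : KAmb a b | r < (j : ℤ) → k.2 j = 0} = {k : KAmb a b | k.2 j = 0} := by
        ext k; simp [h]
      rw [e2]
      exact isClosed_eq ((continuous_apply j).comp continuous_snd) continuous_const
    · have e2 : {k : KAmb a b | r < (j : ℤ) → k.2 j = 0} = Set.univ := by
        ext k; simp [h]
      rw [e2]; exact isClosed_univ

def Phi (a b : ℤ) (z : Jspace a b) (r : ℤ) (p : ℝ≥0∞ × ℝ≥0∞) : KAmb a b :=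
  (fun j => if (j : ℤ) < r then 0 else if (j : ℤ) = r then p.1
      else if hb : b < (j : ℤ) then z ⟨j.1, hb, j.2.2⟩ else 0,
   fun j => if r < (j : ℤ) then 0 else if (j : ℤ) = r then p.2
      else if ha : (j : ℤ) < a then z ⟨j.1, j.2.1, ha⟩ else 0)

lemma Phi_mem {r : ℤ} (hrb : b ≤ r) (hra : r ≤ a) (z : Jspace a b) (p : ℝ≥0∞ × ℝ≥0∞) :
    Phi a b z r p ∈ KSet a b := by
  refine ⟨r, hrb, hra, fun j hj => ?_, fun j hj => ?_⟩
  · simp only [Phi, if_pos hj]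
  · simp only [Phi, if_pos hj]

lemma Phi_delta {r : ℤ} (hrb : b ≤ r) (hra : r ≤ a) {z : Jspace a b} {p : ℝ≥0∞ × ℝ≥0∞}
    (hp : ∀ h : b < r ∧ r < a, p.1 + p.2 = z ⟨r, h⟩) :
    deltaMap a b (Phi a b z r p) = z := by
  funext j
  rcases j with ⟨i, h1, h2⟩
  show (Phi a b z r p).1 ⟨i, h1.le, h2⟩ + (Phi a b z r p).2 ⟨i, h1, h2.le⟩ = z ⟨i, h1, h2⟩
  rcases lt_trichotomy i r with h | h | h
  · simp only [Phi, if_pos h, if_neg (show ¬ r < i by omega), if_neg (show ¬ i = r by omega),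
      dif_pos h2, zero_add]
  · subst h
    simp only [Phi, if_neg (lt_irrefl i), if_pos rfl]
    exact hp ⟨h1, h2⟩
  · simp only [Phi, if_neg (show ¬ i < r by omega), if_neg (show ¬ i = r by omega),
      if_pos h, dif_pos h1, add_zero]

lemma Phi_cont (z : Jspace a b) (r : ℤ) : Continuous fun p => Phi a b z r p := by
  apply Continuous.prodMk
  · apply continuous_pi
    intro j
    by_cases h1 : (j : ℤ) < r
    · simp only [Phi, if_pos h1]; exact continuous_const
    · by_cases h2 : (j : ℤ) = r
      · simp only [Phi, if_neg h1, if_pos h2]; exact continuous_fst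
      · simp only [Phi, if_neg h1, if_neg h2]; exact continuous_const
  · apply continuous_pi
    intro j
    by_cases h1 : r < (j : ℤ)
    · simp only [Phi, if_pos h1]; exact continuous_const
    · by_cases h2 : (j : ℤ) = r
      · simp only [Phi, if_neg h1, if_pos h2]; exact continuous_snd
      · simp only [Phi, if_neg h1, if_neg h2]; exact continuous_const

def Cset (a b : ℤ) (z : Jspace a b) (r : ℤ) : Set (ℝ≥0∞ × ℝ≥0∞) :=
  {p | ∀ h : b < r ∧ r < a, p.1 + p.2 = z ⟨r, h⟩}

lemma Cset_preconn (z : Jspace a b) (r : ℤ) : IsPreconnected (Cset a b z r) := by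
  by_cases hint : b < r ∧ r < a
  · have hC : Cset a b z r = {p : ℝ≥0∞ × ℝ≥0∞ | p.1 + p.2 = z ⟨r, hint⟩} := by
      ext p
      simp only [Cset, Set.mem_setOf_eq]
      exact ⟨fun h => h hint, fun h _ => h⟩
    rw [hC]
    set w := z ⟨r, hint⟩ with hw
    by_cases hwt : w = ⊤
    · have e : {p : ℝ≥0∞ × ℝ≥0∞ | p.1 + p.2 = w}
          = ((fun v => ((⊤ : ℝ≥0∞), v)) '' Set.Iic ⊤) ∪
            ((fun u => (u, (⊤ : ℝ≥0∞))) '' Set.Iic ⊤) := by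
        ext ⟨u, v⟩
        simp only [Set.mem_setOf_eq, Set.mem_union, Set.mem_image, Set.mem_Iic, hwt,
          Prod.mk.injEq]
        constructor
        · intro h
          rcases ENNReal.add_eq_top.mp h with h | h
          · exact Or.inl ⟨v, le_top, h.symm, rfl⟩
          · exact Or.inr ⟨u, le_top, rfl, h.symm⟩
        · rintro (⟨v', _, hu, hv⟩ | ⟨u', _, hu, hv⟩)
          · rw [← hu]; simp
          · rw [← hv]; simp
      rw [e]
      apply IsPreconnected.union (⊤, ⊤)
      · exact ⟨⊤, Set.mem_Iic.mpr le_top, rfl⟩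
      · exact ⟨⊤, Set.mem_Iic.mpr le_top, rfl⟩
      · exact isPreconnected_Iic.image _ (continuous_const.prodMk continuous_id).continuousOn
      · exact isPreconnected_Iic.image _ (continuous_id.prodMk continuous_const).continuousOn
    · have e : {p : ℝ≥0∞ × ℝ≥0∞ | p.1 + p.2 = w} = (fun u => (u, w - u)) '' Set.Iic w := by
        ext ⟨u, v⟩
        simp only [Set.mem_setOf_eq, Set.mem_image, Set.mem_Iic, Prod.mk.injEq]
        constructor
        · intro h
          have hu : u ≤ w := by rw [← h]; exact self_le_add_right u v
          have hunt : u ≠ ⊤ := fun hc => hwt (by rw [← h, hc, top_add])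
          refine ⟨u, hu, rfl, ?_⟩
          rw [← h, ENNReal.add_sub_cancel_left hunt]
        · rintro ⟨u', hu', h1, h2⟩
          rw [← h1, ← h2]
          exact add_tsub_cancel_of_le hu'
      rw [e]
      exact isPreconnected_Iic.image _
        (continuous_id.prodMk (ENNReal.continuous_sub_left hwt)).continuousOn
  · have e : Cset a b z r = Set.univ := by
      ext p
      simp only [Cset, Set.mem_setOf_eq, Set.mem_univ, iff_true]
      intro h
      exact absurd h hint
    rw [e]
    have e2 : (Set.univ : Set (ℝ≥0∞ × ℝ≥0∞)) = (Set.Iic ⊤) ×ˢ (Set.Iic ⊤) := by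
      ext p; simp
    rw [e2]
    exact isPreconnected_Iic.prod isPreconnected_Iic

lemma piece_subset (z : Jspace a b) {r : ℤ} (hrb : b ≤ r) (hra : r ≤ a) :
    Phi a b z r '' Cset a b z r ⊆ KSet a b ∩ {k | deltaMap a b k = z} := by
  rintro _ ⟨p, hp, rfl⟩
  exact ⟨Phi_mem hrb hra z p, Phi_delta hrb hra hp⟩

lemma F_mem_piece (z : Jspace a b) {k : KAmb a b} (hk : k ∈ KSet a b)
    (hδ : deltaMap a b k = z) :
    ∃ r, b ≤ r ∧ r ≤ a ∧ k ∈ Phi a b z r '' Cset a b z r := by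
  obtain ⟨r, hrb, hra, hx0, hy0⟩ := good_witness hk
  refine ⟨r, hrb, hra, (Xext a b k r, Yext a b k r), fun h => ?_, ?_⟩
  · rw [← hδ, delta_apply k h.1 h.2]
  · apply Prod.ext
    · funext j
      rcases j with ⟨i, hbi, hia⟩
      rcases lt_trichotomy i r with h | h | h
      · simp only [Phi, if_pos h]
        have := hx0 i h
        rw [Xext, dif_pos (show b ≤ i ∧ i < a from ⟨hbi, hia⟩)] at this
        exact this.symm
      · subst h
        simp only [Phi, if_neg (lt_irrefl i)]
        rw [if_pos trivial, Xext, dif_pos (show b ≤ i ∧ i < a from ⟨hbi, hia⟩)]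
      · simp only [Phi, if_neg (show ¬ i < r by omega), if_neg (show ¬ i = r by omega),
          dif_pos (show b < i by omega)]
        rw [← hδ, delta_apply k (by omega) hia, hy0 i h, add_zero, Xext,
          dif_pos (show b ≤ i ∧ i < a from ⟨hbi, hia⟩)]
    · funext j
      rcases j with ⟨i, hbi, hia⟩
      rcases lt_trichotomy i r with h | h | h
      · simp only [Phi, if_neg (show ¬ r < i by omega), if_neg (show ¬ i = r by omega),
          dif_pos (show i < a by omega)]
        rw [← hδ, delta_apply k hbi (by omega), hx0 i h, zero_add, Yext,
          dif_pos (show b < i ∧ i ≤ a from ⟨hbi, hia⟩)]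
      · subst h
        simp only [Phi, if_neg (lt_irrefl i)]
        rw [if_pos trivial, Yext, dif_pos (show b < i ∧ i ≤ a from ⟨hbi, hia⟩)]
      · simp only [Phi, if_pos h]
        have := hy0 i h
        rw [Yext, dif_pos (show b < i ∧ i ≤ a from ⟨hbi, hia⟩)] at this
        exact this.symm

lemma chain_point (z : Jspace a b) {r : ℤ} (hrb : b ≤ r) (hra : r + 1 ≤ a) :
    ∃ q, q ∈ Phi a b z r '' Cset a b z r ∧ q ∈ Phi a b z (r + 1) '' Cset a b z (r + 1) := by
  classical
  set v : ℝ≥0∞ := if h : b < r ∧ r < a then z ⟨r, h⟩ else 0 with hv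
  set u : ℝ≥0∞ := if h : b < r + 1 ∧ r + 1 < a then z ⟨r + 1, h⟩ else 0 with hu
  refine ⟨Phi a b z r (0, v), ⟨(0, v), fun h => ?_, rfl⟩, ⟨(u, 0), fun h => ?_, ?_⟩⟩
  · show (0 : ℝ≥0∞) + v = z ⟨r, h⟩
    rw [hv, dif_pos h, zero_add]
  · show u + (0 : ℝ≥0∞) = z ⟨r + 1, h⟩
    rw [hu, dif_pos h, add_zero]
  · -- Phi z (r+1) (u, 0) = Phi z r (0, v)
    apply Prod.ext
    · funext j
      rcases j with ⟨i, hbi, hia⟩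
      show (if i < r + 1 then 0 else if i = r + 1 then u
          else if hb : b < i then z ⟨i, hb, hia⟩ else 0)
        = (if i < r then 0 else if i = r then (0 : ℝ≥0∞)
          else if hb : b < i then z ⟨i, hb, hia⟩ else 0)
      by_cases h1 : i < r
      · rw [if_pos (show i < r + 1 by omega), if_pos h1]
      · by_cases h2 : i = r
        · rw [if_pos (show i < r + 1 by omega), if_neg h1, if_pos h2]
        · by_cases h3 : i = r + 1
          · rw [if_neg (show ¬ i < r + 1 by omega), if_pos h3, if_neg h1, if_neg h2,
              dif_pos (show b < i by omega), hu, dif_pos (show b < r + 1 ∧ r + 1 < a by omega)]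
            subst h3
            rfl
          · rw [if_neg (show ¬ i < r + 1 by omega), if_neg h3, if_neg h1, if_neg h2]
    · funext j
      rcases j with ⟨i, hbi, hia⟩
      show (if r + 1 < i then 0 else if i = r + 1 then (0 : ℝ≥0∞)
          else if ha : i < a then z ⟨i, hbi, ha⟩ else 0)
        = (if r < i then 0 else if i = r then v
          else if ha : i < a then z ⟨i, hbi, ha⟩ else 0)
      by_cases h1 : r + 1 < i
      · rw [if_pos h1, if_pos (show r < i by omega)]
      · by_cases h2 : i = r + 1
        · rw [if_neg h1, if_pos h2, if_pos (show r < i by omega)]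
        · by_cases h3 : i = r
          · rw [if_neg h1, if_neg h2, if_neg (show ¬ r < i by omega), if_pos h3,
              dif_pos (show i < a by omega), hv, dif_pos (show b < r ∧ r < a by omega)]
            subst h3
            rfl
          · rw [if_neg h1, if_neg h2, if_neg (show ¬ r < i by omega), if_neg h3]

lemma card_Ico_real (hab : b ≤ a) : (((Finset.Ico b a).card : ℝ)) = (a : ℝ) - (b : ℝ) := by
  rw [Int.card_Ico]
  have h0 : (((a - b).toNat : ℤ) : ℝ) = ((a - b : ℤ) : ℝ) := by
    exact_mod_cast congrArg (Int.cast : ℤ → ℝ) (Int.toNat_of_nonneg (by omega))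
  push_cast at h0 ⊢
  linarith

lemma sMap_phi_bot {σ : EReal → ℝ} (hσ1 : σ ⊤ = 1) (hab : b ≤ a) (z : Jspace a b) :
    sMap a b σ (Phi a b z b (⊤, 0)) = b := by
  rw [sMap_eq]
  have hterm : ∀ i ∈ Finset.Ico b a, σ (S a b (Phi a b z b (⊤, 0)) i) = 1 := by
    intro i hi
    rw [Finset.mem_Ico] at hi
    have hX : XS a b (Phi a b z b (⊤, 0)) i = ⊤ := by
      have hmem : b ∈ Finset.Icc b i := Finset.mem_Icc.mpr ⟨le_refl b, hi.1⟩
      have hXb : Xext a b (Phi a b z b (⊤, 0)) b = ⊤ := by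
        rw [Xext, dif_pos (show b ≤ b ∧ b < a from ⟨le_refl b, lt_of_le_of_lt hi.1 hi.2⟩)]
        show (if (b : ℤ) < b then 0 else if (b : ℤ) = b then (⊤ : ℝ≥0∞) else _) = ⊤
        rw [if_neg (lt_irrefl b), if_pos rfl]
      refine top_le_iff.mp ?_
      calc (⊤ : ℝ≥0∞) = Xext a b (Phi a b z b (⊤, 0)) b := hXb.symm
        _ ≤ XS a b (Phi a b z b (⊤, 0)) i :=
          Finset.single_le_sum (fun l _ => zero_le) hmem
    have hY : YS a b (Phi a b z b (⊤, 0)) i = 0 := by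
      apply Finset.sum_eq_zero
      intro l hl
      rw [Finset.mem_Ioc] at hl
      rw [Yext]
      split
      · next h =>
        show (if b < (l : ℤ) then 0 else _) = 0
        rw [if_pos h.1]
      · rfl
    rw [S, hX, hY, EReal.coe_ennreal_top, EReal.coe_ennreal_zero, sub_zero, hσ1]
  rw [Finset.sum_congr rfl hterm, Finset.sum_const, nsmul_eq_mul, mul_one, card_Ico_real hab]
  ring

lemma sMap_phi_top {σ : EReal → ℝ} (hσ0 : σ ⊥ = 0) (hab : b ≤ a) (z : Jspace a b) :
    sMap a b σ (Phi a b z a (0, ⊤)) = a := by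
  rw [sMap_eq]
  have hterm : ∀ i ∈ Finset.Ico b a, σ (S a b (Phi a b z a (0, ⊤)) i) = 0 := by
    intro i hi
    rw [Finset.mem_Ico] at hi
    have hY : YS a b (Phi a b z a (0, ⊤)) i = ⊤ := by
      have hmem : a ∈ Finset.Ioc i a := Finset.mem_Ioc.mpr ⟨hi.2, le_refl a⟩
      have hYa : Yext a b (Phi a b z a (0, ⊤)) a = ⊤ := by
        rw [Yext, dif_pos (show b < a ∧ a ≤ a from ⟨lt_of_le_of_lt hi.1 hi.2, le_refl a⟩)]
        show (if (a : ℤ) < a then 0 else if (a : ℤ) = a then (⊤ : ℝ≥0∞) else _) = ⊤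
        rw [if_neg (lt_irrefl a), if_pos rfl]
      refine top_le_iff.mp ?_
      calc (⊤ : ℝ≥0∞) = Yext a b (Phi a b z a (0, ⊤)) a := hYa.symm
        _ ≤ YS a b (Phi a b z a (0, ⊤)) i :=
          Finset.single_le_sum (fun l _ => zero_le) hmem
    have hX : XS a b (Phi a b z a (0, ⊤)) i = 0 := by
      apply Finset.sum_eq_zero
      intro l hl
      rw [Finset.mem_Icc] at hl
      rw [Xext]
      split
      · next h =>
        show (if (l : ℤ) < a then 0 else _) = 0
        rw [if_pos h.2]
      · rfl
    rw [S, hX, hY, EReal.coe_ennreal_top, EReal.coe_ennreal_zero, EReal.sub_top, hσ0]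
  rw [Finset.sum_congr rfl hterm, Finset.sum_const, smul_zero]
  ring

lemma pieces_preconn (hab : b ≤ a) (z : Jspace a b) :
    IsPreconnected (⋃ r ∈ Finset.Icc b a, Phi a b z r '' Cset a b z r) := by
  have key : ∀ n : ℕ, b + n ≤ a →
      IsPreconnected (⋃ r ∈ Finset.Icc b (b + n), Phi a b z r '' Cset a b z r) := by
    intro n
    induction n with
    | zero =>
      intro _
      have e : Finset.Icc b (b + (0 : ℕ)) = {b} := by
        norm_num
      rw [e]
      simp only [Finset.mem_singleton, Set.biUnion_and', Set.iUnion_iUnion_eq_left]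
      exact (Cset_preconn z b).image _ (Phi_cont z b).continuousOn
    | succ m ih =>
      intro h
      have hc : ((m + 1 : ℕ) : ℤ) = (m : ℤ) + 1 := by push_cast; ring
      have h1 : b + (m : ℤ) ≤ a := by omega
      have hsplit : Finset.Icc b (b + ((m + 1 : ℕ) : ℤ))
          = insert (b + m + 1) (Finset.Icc b (b + m)) := by
        ext x
        simp only [Finset.mem_Icc, Finset.mem_insert]
        omega
      rw [hsplit, Finset.set_biUnion_insert]
      obtain ⟨q, hq1, hq2⟩ := chain_point z (r := b + m) (by omega) (by omega)
      apply IsPreconnected.union q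
      · exact hq2
      · exact Set.mem_biUnion (Finset.mem_Icc.mpr ⟨by omega, le_refl _⟩) hq1
      · exact (Cset_preconn z _).image _ (Phi_cont z _).continuousOn
      · exact ih h1
  have := key (a - b).toNat (by omega)
  have e : b + ((a - b).toNat : ℤ) = a := by omega
  rwa [e] at this

end JKAux


theorem statement0 (a b : ℤ) (hab : b ≤ a)
    (ς : EReal ≃ₜ Set.Icc (0 : ℝ) 1) (hς : Monotone (sigmaR ς)) :
    ∃ e : ↥(KSet a b) ≃ₜ Jspace a b × ↥(Set.Icc (b : ℝ) (a : ℝ)),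
      ∀ k : ↥(KSet a b),
        (e k).1 = deltaMap a b (k : KAmb a b) ∧
          ((e k).2 : ℝ) = sMap a b (sigmaR ς) (k : KAmb a b) := by
  classical
  set σ : EReal → ℝ := sigmaR ς with hσdef
  have hσinj : Function.Injective σ := fun u v h => ς.injective (Subtype.ext h)
  have hstrict : StrictMono σ := hς.strictMono_of_injective hσinj
  have hmem01 : ∀ w, σ w ∈ Set.Icc (0 : ℝ) 1 := fun w => (ς w).2
  have hσ1 : σ ⊤ = 1 := by
    obtain ⟨w, hw⟩ := ς.surjective ⟨1, by norm_num⟩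
    have h1 : σ w = 1 := by
      show ((ς w : Set.Icc (0 : ℝ) 1) : ℝ) = 1
      rw [hw]
    have h2 := hς (le_top : w ≤ ⊤)
    rw [h1] at h2
    exact le_antisymm (hmem01 ⊤).2 h2
  have hσ0 : σ ⊥ = 0 := by
    obtain ⟨w, hw⟩ := ς.surjective ⟨0, by norm_num⟩
    have h1 : σ w = 0 := by
      show ((ς w : Set.Icc (0 : ℝ) 1) : ℝ) = 0
      rw [hw]
    have h2 := hς (bot_le : (⊥ : EReal) ≤ w)
    rw [h1] at h2
    exact le_antisymm h2 (hmem01 ⊥).1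
  have hσc : Continuous σ := continuous_subtype_val.comp ς.continuous
  have hrange : ∀ k : KAmb a b, sMap a b σ k ∈ Set.Icc (b : ℝ) (a : ℝ) := by
    intro k
    rw [JKAux.sMap_eq]
    have hsum_le : ∑ i ∈ Finset.Ico b a, σ (JKAux.S a b k i)
        ≤ ∑ i ∈ Finset.Ico b a, (1 : ℝ) :=
      Finset.sum_le_sum fun i _ => (hmem01 _).2
    have hsum_ge : (0 : ℝ) ≤ ∑ i ∈ Finset.Ico b a, σ (JKAux.S a b k i) :=
      Finset.sum_nonneg fun i _ => (hmem01 _).1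
    rw [Finset.sum_const, nsmul_eq_mul, mul_one] at hsum_le
    have hcard := JKAux.card_Ico_real (a := a) (b := b) hab
    constructor
    · rw [hcard] at hsum_le; linarith
    · linarith
  haveI : CompactSpace ↥(KSet a b) :=
    isCompact_iff_compactSpace.mp (JKAux.isClosed_KSet.isCompact)
  let F : ↥(KSet a b) → Jspace a b × ↥(Set.Icc (b : ℝ) (a : ℝ)) :=
    fun k => (deltaMap a b k.1, ⟨sMap a b σ k.1, hrange k.1⟩)
  have hFinj : Function.Injective F := by
    intro k k' h
    rw [Prod.ext_iff] at h
    have hδ : deltaMap a b k.1 = deltaMap a b k'.1 := h.1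
    have hs : sMap a b σ k.1 = sMap a b σ k'.1 := congrArg Subtype.val h.2
    exact Subtype.ext (JKAux.inj_main hstrict k.2 k'.2 hδ hs)
  have hFsurj : Function.Surjective F := by
    rintro ⟨z, t⟩
    set U := ⋃ r ∈ Finset.Icc b a, JKAux.Phi a b z r '' JKAux.Cset a b z r with hU
    have hUsub : U ⊆ KSet a b ∩ {k | deltaMap a b k = z} := by
      intro k hk
      rw [hU] at hk
      obtain ⟨r, hr, hkr⟩ := Set.mem_iUnion₂.mp hk
      rw [Finset.mem_Icc] at hr
      exact JKAux.piece_subset z hr.1 hr.2 hkr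
    have hpc := JKAux.pieces_preconn hab z
    have himg : IsPreconnected (sMap a b σ '' U) :=
      hpc.image _ ((JKAux.sMap_continuousOn hσc).mono fun k hk => (hUsub hk).1)
    have hbmem : (b : ℝ) ∈ sMap a b σ '' U := by
      refine ⟨JKAux.Phi a b z b (⊤, 0), ?_, JKAux.sMap_phi_bot hσ1 hab z⟩
      exact Set.mem_iUnion₂.mpr ⟨b, Finset.mem_Icc.mpr ⟨le_refl b, hab⟩,
        ⟨(⊤, 0), fun h => absurd h.1 (lt_irrefl b), rfl⟩⟩
    have hamem : (a : ℝ) ∈ sMap a b σ '' U := by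
      refine ⟨JKAux.Phi a b z a (0, ⊤), ?_, JKAux.sMap_phi_top hσ0 hab z⟩
      exact Set.mem_iUnion₂.mpr ⟨a, Finset.mem_Icc.mpr ⟨hab, le_refl a⟩,
        ⟨(0, ⊤), fun h => absurd h.2 (lt_irrefl a), rfl⟩⟩
    have hsub2 : Set.Icc (b : ℝ) (a : ℝ) ⊆ sMap a b σ '' U :=
      himg.Icc_subset hbmem hamem
    obtain ⟨k, hkU, hks⟩ := hsub2 t.2
    obtain ⟨hk1, hk2⟩ := hUsub hkU
    refine ⟨⟨k, hk1⟩, ?_⟩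
    show (deltaMap a b k, (⟨sMap a b σ k, hrange k⟩ : ↥(Set.Icc (b : ℝ) (a : ℝ)))) = (z, t)
    exact Prod.ext hk2 (Subtype.ext hks)
  have hFcont : Continuous F := by
    apply Continuous.prodMk
    · apply continuous_pi
      intro j
      have h1 : Continuous fun k : KAmb a b =>
          k.1 ⟨j.1, j.2.1.le, j.2.2⟩ + k.2 ⟨j.1, j.2.1, j.2.2.le⟩ :=
        ((continuous_apply _).comp continuous_fst).add
          ((continuous_apply _).comp continuous_snd)
      exact h1.comp continuous_subtype_val
    · exact ((JKAux.sMap_continuousOn hσc).restrict).subtype_mk fun k => hrange k.1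
  let E : ↥(KSet a b) ≃ Jspace a b × ↥(Set.Icc (b : ℝ) (a : ℝ)) :=
    Equiv.ofBijective F ⟨hFinj, hFsurj⟩
  exact ⟨Continuous.homeoOfEquivCompactToT2 (f := E) hFcont, fun k => ⟨rfl, rfl⟩⟩
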